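/- Define p_n by the recursion p_1 = (1−p)/2 and, for n ≥ 2, p_n = (p+1/2) Σ_{k1+k2=n−1} p_{k1} p_{k2} − (p/2) Σ_{k1+k2+k3+k4=n−1} p_{k1} p_{k2} p_{k3} p_{k4}. Then for every n, the polynomial (2/(1−p))·p_n has derivative zero at p = 1/4. -/

import Mathlib

open Finset in
/-- Compositions of `n-1` into 2 positive parts. -/
def comp2 (n : ℕ) : Finset (ℕ × ℕ) :=
  ((range n) ×ˢ (range n)).filter fun q => 1 ≤ q.1 ∧ 1 ≤ q.2 ∧ q.1 + q.2 = n - 1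

open Finset in
/-- Compositions of `n-1` into 3 positive parts. -/
def comp3 (n : ℕ) : Finset (ℕ × ℕ × ℕ) :=
  ((range n) ×ˢ (range n) ×ˢ (range n)).filter fun q =>
    1 ≤ q.1 ∧ 1 ≤ q.2.1 ∧ 1 ≤ q.2.2 ∧ q.1 + q.2.1 + q.2.2 = n - 1

open Finset in
/-- Compositions of `n-1` into 4 positive parts. -/
def comp4 (n : ℕ) : Finset (ℕ × ℕ × ℕ × ℕ) :=
  ((range n) ×ˢ (range n) ×ˢ (range n) ×ˢ (range n)).filter fun q =>
    1 ≤ q.1 ∧ 1 ≤ q.2.1 ∧ 1 ≤ q.2.2.1 ∧ 1 ≤ q.2.2.2 ∧ q.1 + q.2.1 + q.2.2.1 + q.2.2.2 = n - 1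

theorem stmt_12 (P : ℕ → ℝ → ℝ)
    (hP1 : ∀ x : ℝ, P 1 x = (1 - x) / 2)
    (hPrec : ∀ n, 2 ≤ n → ∀ x : ℝ,
      P n x = (x + 1/2) * ∑ q ∈ comp2 n, P q.1 x * P q.2 x
              - x/2 * ∑ q ∈ comp4 n, P q.1 x * P q.2.1 x * P q.2.2.1 x * P q.2.2.2 x)
    :
    ∀ n, 1 ≤ n → deriv (fun x : ℝ => 2 / (1 - x) * P n x) (1/4) = 0 := by
  have key : ∀ n, 1 ≤ n → HasDerivAt (P n) (-(4/3) * P n (1/4)) (1/4) := by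
      intro n
      induction n using Nat.strong_induction_on with
      | _ n ih =>
        intro hn
        rcases Nat.lt_or_ge n 2 with h | h
        · have hn1 : n = 1 := by omega
          subst hn1
          have hfun : P 1 = fun x => (1 - x) / 2 := funext hP1
          rw [hfun]
          have hd := ((hasDerivAt_id (1/4 : ℝ)).const_sub 1).div_const 2
          refine hd.congr_deriv ?_
          norm_num
        · have hfun : P n = fun x => (x + 1/2) * (∑ q ∈ comp2 n, P q.1 x * P q.2 x)
            - x/2 * (∑ q ∈ comp4 n, P q.1 x * P q.2.1 x * P q.2.2.1 x * P q.2.2.2 x) :=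
            funext (hPrec n h)
          rw [hfun]
          have hS2 : HasDerivAt (fun x => ∑ q ∈ comp2 n, P q.1 x * P q.2 x)
              (∑ q ∈ comp2 n, ((-(4/3) * P q.1 (1/4)) * P q.2 (1/4)
                + P q.1 (1/4) * (-(4/3) * P q.2 (1/4)))) (1/4) := by
            apply HasDerivAt.fun_sum
            intro q hq
            simp only [comp2, Finset.mem_filter, Finset.mem_product, Finset.mem_range] at hq
            obtain ⟨⟨hb1, hb2⟩, h1, h2, h3⟩ := hq
            exact (ih q.1 (by omega) h1).mul (ih q.2 (by omega) h2)
          have hS4 : HasDerivAt (fun x => ∑ q ∈ comp4 n, P q.1 x * P q.2.1 x * P q.2.2.1 x * P q.2.2.2 x)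
              (∑ q ∈ comp4 n,
                ((((-(4/3) * P q.1 (1/4)) * P q.2.1 (1/4) + P q.1 (1/4) * (-(4/3) * P q.2.1 (1/4))) * P q.2.2.1 (1/4)
                  + P q.1 (1/4) * P q.2.1 (1/4) * (-(4/3) * P q.2.2.1 (1/4))) * P q.2.2.2 (1/4)
                  + P q.1 (1/4) * P q.2.1 (1/4) * P q.2.2.1 (1/4) * (-(4/3) * P q.2.2.2 (1/4)))) (1/4) := by
            apply HasDerivAt.fun_sum
            intro q hq
            simp only [comp4, Finset.mem_filter, Finset.mem_product, Finset.mem_range] at hq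
            obtain ⟨⟨hb1, hb2, hb3, hb4⟩, h1, h2, h3, h4, h5⟩ := hq
            exact (((ih q.1 (by omega) h1).mul (ih q.2.1 (by omega) h2)).mul
              (ih q.2.2.1 (by omega) h3)).mul (ih q.2.2.2 (by omega) h4)
          have hD := (((hasDerivAt_id (1/4 : ℝ)).add_const (1/2 : ℝ)).fun_mul hS2).sub
            (((hasDerivAt_id (1/4 : ℝ)).div_const 2).fun_mul hS4)
          refine hD.congr_deriv ?_
          simp only [id_eq]
          have hT2 : (∑ q ∈ comp2 n, ((-(4/3) * P q.1 (1/4)) * P q.2 (1/4)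
                + P q.1 (1/4) * (-(4/3) * P q.2 (1/4))))
              = -(8/3) * ∑ q ∈ comp2 n, P q.1 (1/4) * P q.2 (1/4) := by
            rw [Finset.mul_sum]
            exact Finset.sum_congr rfl fun q _ => by ring
          have hT4 : (∑ q ∈ comp4 n,
                ((((-(4/3) * P q.1 (1/4)) * P q.2.1 (1/4) + P q.1 (1/4) * (-(4/3) * P q.2.1 (1/4))) * P q.2.2.1 (1/4)
                  + P q.1 (1/4) * P q.2.1 (1/4) * (-(4/3) * P q.2.2.1 (1/4))) * P q.2.2.2 (1/4)
                  + P q.1 (1/4) * P q.2.1 (1/4) * P q.2.2.1 (1/4) * (-(4/3) * P q.2.2.2 (1/4))))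
              = -(16/3) * ∑ q ∈ comp4 n, P q.1 (1/4) * P q.2.1 (1/4) * P q.2.2.1 (1/4) * P q.2.2.2 (1/4) := by
            rw [Finset.mul_sum]
            exact Finset.sum_congr rfl fun q _ => by ring
          rw [hT2, hT4]
          ring
  intro n hn
  have hP := key n hn
  have h1 : HasDerivAt (fun x : ℝ => 1 - x) (-1) (1/4) := by
    simpa using (hasDerivAt_id (1/4 : ℝ)).const_sub 1
  have hg : HasDerivAt (fun x : ℝ => 2 / (1 - x)) (32/9) (1/4) := by
    have := (hasDerivAt_const (1/4 : ℝ) (2:ℝ)).fun_div h1 (by norm_num)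
    refine this.congr_deriv ?_
    norm_num
  have hfull := hg.fun_mul hP
  rw [hfull.deriv]
  ring
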